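/- Let ε > 0 and ν ∈ ℝ³. Let Φ : ℝ⁴ → ℝ be twice continuously differentiable near a point p ∈ ℝ⁴ with ∂₁Φ(p) ≠ 0, and let h, e : ℝ⁴ → ℝ³ be differentiable near p. Set N = (1, −∂₂Φ, −∂₃Φ), w₄ = ⟨e, N⟩, μ₂ = h₂ + (∂₂Φ)h₁ + ε(∂ₜΦ)e₃, and μ₃ = h₃ + (∂₃Φ)h₁ − ε(∂ₜΦ)e₂. Assume that at the point p one has ε∂ₜ^Φ e − ∇^Φ × h + ε(∇^Φ · e)ν = 0 and ∂ₜΦ(p) = ⟨ν, N(p)⟩. Then ε∂ₜw₄ + ∂₃μ₂ − ∂₂μ₃ = 0 at p. -/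

import Mathlib

open Filter Topology

/-- Partial derivative `∂ᵢ f` on `ℝ⁴` (coordinates `(t, x₁, x₂, x₃)` indexed by `Fin 4`,
with `∂₀ = ∂ₜ`). -/
noncomputable def pd (i : Fin 4) (f : (Fin 4 → ℝ) → ℝ) (x : Fin 4 → ℝ) : ℝ :=
  fderiv ℝ f x (Pi.single i 1)

/-- Transformed derivative `∂ᵢ^Φ`: `∂ₜ^Φ f = ∂ₜf − (∂ₜΦ/∂₁Φ)∂₁f`,
`∂₁^Φ f = ∂₁f/∂₁Φ`, and `∂ⱼ^Φ f = ∂ⱼf − (∂ⱼΦ/∂₁Φ)∂₁f` for `j = 2, 3`. -/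
noncomputable def pdPhi (Φ : (Fin 4 → ℝ) → ℝ) (i : Fin 4) (f : (Fin 4 → ℝ) → ℝ)
    (x : Fin 4 → ℝ) : ℝ :=
  if i = 1 then pd 1 f x / pd 1 Φ x else pd i f x - pd i Φ x / pd 1 Φ x * pd 1 f x

/-- Transformed divergence `∇^Φ · u = ∂₁^Φu₁ + ∂₂^Φu₂ + ∂₃^Φu₃`. -/
noncomputable def divPhi (Φ : (Fin 4 → ℝ) → ℝ) (u : (Fin 4 → ℝ) → Fin 3 → ℝ)
    (x : Fin 4 → ℝ) : ℝ :=
  pdPhi Φ 1 (fun y => u y 0) x + pdPhi Φ 2 (fun y => u y 1) x + pdPhi Φ 3 (fun y => u y 2) x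

/-- Transformed curl
`∇^Φ × u = (∂₂^Φu₃ − ∂₃^Φu₂, ∂₃^Φu₁ − ∂₁^Φu₃, ∂₁^Φu₂ − ∂₂^Φu₁)`. -/
noncomputable def curlPhi (Φ : (Fin 4 → ℝ) → ℝ) (u : (Fin 4 → ℝ) → Fin 3 → ℝ)
    (x : Fin 4 → ℝ) : Fin 3 → ℝ :=
  ![pdPhi Φ 2 (fun y => u y 2) x - pdPhi Φ 3 (fun y => u y 1) x,
    pdPhi Φ 3 (fun y => u y 0) x - pdPhi Φ 1 (fun y => u y 2) x,
    pdPhi Φ 1 (fun y => u y 1) x - pdPhi Φ 2 (fun y => u y 0) x]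

/-- Cancellation lemma: if at a point `p` the reduced vacuum Maxwell equation
`ε∂ₜ^Φ e − ∇^Φ × h + ε(∇^Φ · e)ν = 0` holds and `∂ₜΦ = ⟨ν, N⟩` with
`N = (1, −∂₂Φ, −∂₃Φ)`, then `ε∂ₜw₄ + ∂₃μ₂ − ∂₂μ₃ = 0` at `p`, where `w₄ = ⟨e, N⟩`,
`μ₂ = h₂ + (∂₂Φ)h₁ + ε(∂ₜΦ)e₃`, and `μ₃ = h₃ + (∂₃Φ)h₁ − ε(∂ₜΦ)e₂`. -/
lemma pd_sub {f g : (Fin 4 → ℝ) → ℝ} {p : Fin 4 → ℝ} (hf : DifferentiableAt ℝ f p)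
    (hg : DifferentiableAt ℝ g p) (i : Fin 4) :
    pd i (fun x => f x - g x) p = pd i f p - pd i g p := by
  simp [pd, fderiv_fun_sub hf hg]

lemma pd_add {f g : (Fin 4 → ℝ) → ℝ} {p : Fin 4 → ℝ} (hf : DifferentiableAt ℝ f p)
    (hg : DifferentiableAt ℝ g p) (i : Fin 4) :
    pd i (fun x => f x + g x) p = pd i f p + pd i g p := by
  simp [pd, fderiv_fun_add hf hg]

lemma pd_mul {f g : (Fin 4 → ℝ) → ℝ} {p : Fin 4 → ℝ} (hf : DifferentiableAt ℝ f p)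
    (hg : DifferentiableAt ℝ g p) (i : Fin 4) :
    pd i (fun x => f x * g x) p = f p * pd i g p + g p * pd i f p := by
  simp [pd, fderiv_fun_mul hf hg]

lemma pd_const_mul {f : (Fin 4 → ℝ) → ℝ} {p : Fin 4 → ℝ} (hf : DifferentiableAt ℝ f p)
    (c : ℝ) (i : Fin 4) : pd i (fun x => c * f x) p = c * pd i f p := by
  simp [pd, fderiv_const_mul hf c]


theorem stmt_10 (ε : ℝ) (hε : 0 < ε) (ν : Fin 3 → ℝ)
    (Φ : (Fin 4 → ℝ) → ℝ) (h e : (Fin 4 → ℝ) → Fin 3 → ℝ) (p : Fin 4 → ℝ)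
    (hΦ : ContDiffAt ℝ 2 Φ p) (hΦ1 : pd 1 Φ p ≠ 0)
    (hh : ∀ᶠ x in 𝓝 p, DifferentiableAt ℝ h x)
    (he : ∀ᶠ x in 𝓝 p, DifferentiableAt ℝ e x)
    (heq : ∀ i : Fin 3,
      ε * pdPhi Φ 0 (fun x => e x i) p - curlPhi Φ h p i + ε * divPhi Φ e p * ν i = 0)
    (hbc : pd 0 Φ p = ν 0 - ν 1 * pd 2 Φ p - ν 2 * pd 3 Φ p) :
    ε * pd 0 (fun x => e x 0 - pd 2 Φ x * e x 1 - pd 3 Φ x * e x 2) p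
      + pd 3 (fun x => h x 1 + pd 2 Φ x * h x 0 + ε * pd 0 Φ x * e x 2) p
      - pd 2 (fun x => h x 2 + pd 3 Φ x * h x 0 - ε * pd 0 Φ x * e x 1) p = 0 := by
  -- basic differentiability facts
  have hePt : DifferentiableAt ℝ e p := he.self_of_nhds
  have hhPt : DifferentiableAt ℝ h p := hh.self_of_nhds
  have hE : ∀ i : Fin 3, DifferentiableAt ℝ (fun x => e x i) p := fun i =>
    (differentiableAt_pi.mp hePt) i
  have hH : ∀ i : Fin 3, DifferentiableAt ℝ (fun x => h x i) p := fun i =>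
    (differentiableAt_pi.mp hhPt) i
  have hΦf : ContDiffAt ℝ 1 (fderiv ℝ Φ) p := hΦ.fderiv_right (by norm_num)
  have hΦd : DifferentiableAt ℝ (fderiv ℝ Φ) p := hΦf.differentiableAt one_ne_zero
  have hG : ∀ i : Fin 4, DifferentiableAt ℝ (fun x => pd i Φ x) p := fun i => by
    simp only [pd]; exact hΦd.clm_apply (differentiableAt_const _)
  have clair : ∀ i j : Fin 4,
      pd i (fun x => pd j Φ x) p = pd j (fun x => pd i Φ x) p := by
    have hs := hΦ.isSymmSndFDerivAt (by norm_num)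
    have key : ∀ a b : Fin 4, pd a (fun x => pd b Φ x) p
        = fderiv ℝ (fderiv ℝ Φ) p (Pi.single a 1) (Pi.single b 1) := by
      intro a b
      have hfb : (fun x => pd b Φ x) = fun x => (fderiv ℝ Φ x) (Pi.single b 1) := rfl
      rw [hfb]
      simp only [pd]
      rw [fderiv_clm_apply hΦd (differentiableAt_const _)]
      simp
    intro i j
    rw [key, key, hs]
  -- expand the three outer derivatives
  have T1 : pd 0 (fun x => e x 0 - pd 2 Φ x * e x 1 - pd 3 Φ x * e x 2) p
      = pd 0 (fun x => e x 0) p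
        - (pd 2 Φ p * pd 0 (fun x => e x 1) p + e p 1 * pd 0 (fun x => pd 2 Φ x) p)
        - (pd 3 Φ p * pd 0 (fun x => e x 2) p + e p 2 * pd 0 (fun x => pd 3 Φ x) p) := by
    rw [pd_sub ((hE 0).fun_sub ((hG 2).fun_mul (hE 1))) ((hG 3).fun_mul (hE 2)),
      pd_sub (hE 0) ((hG 2).fun_mul (hE 1)), pd_mul (hG 2) (hE 1), pd_mul (hG 3) (hE 2)]
  have T2 : pd 3 (fun x => h x 1 + pd 2 Φ x * h x 0 + ε * pd 0 Φ x * e x 2) p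
      = pd 3 (fun x => h x 1) p
        + (pd 2 Φ p * pd 3 (fun x => h x 0) p + h p 0 * pd 3 (fun x => pd 2 Φ x) p)
        + (ε * pd 0 Φ p * pd 3 (fun x => e x 2) p
            + e p 2 * (ε * pd 3 (fun x => pd 0 Φ x) p)) := by
    rw [pd_add ((hH 1).fun_add ((hG 2).fun_mul (hH 0)))
        (((hG 0).const_mul ε).fun_mul (hE 2)),
      pd_add (hH 1) ((hG 2).fun_mul (hH 0)), pd_mul (hG 2) (hH 0),
      pd_mul ((hG 0).const_mul ε) (hE 2), pd_const_mul (hG 0) ε]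
  have T3 : pd 2 (fun x => h x 2 + pd 3 Φ x * h x 0 - ε * pd 0 Φ x * e x 1) p
      = pd 2 (fun x => h x 2) p
        + (pd 3 Φ p * pd 2 (fun x => h x 0) p + h p 0 * pd 2 (fun x => pd 3 Φ x) p)
        - (ε * pd 0 Φ p * pd 2 (fun x => e x 1) p
            + e p 1 * (ε * pd 2 (fun x => pd 0 Φ x) p)) := by
    rw [pd_sub ((hH 2).fun_add ((hG 3).fun_mul (hH 0)))
        (((hG 0).const_mul ε).fun_mul (hE 1)),
      pd_add (hH 2) ((hG 3).fun_mul (hH 0)), pd_mul (hG 3) (hH 0),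
      pd_mul ((hG 0).const_mul ε) (hE 1), pd_const_mul (hG 0) ε]
  rw [T1, T2, T3, clair 0 2, clair 0 3, clair 3 2]
  have h0 := heq 0
  have h1 := heq 1
  have h2 := heq 2
  simp only [pdPhi, divPhi, curlPhi, Matrix.cons_val_zero, Matrix.cons_val_one,
    Matrix.head_cons, Matrix.cons_val_two, Matrix.tail_cons,
    show (0 : Fin 4) ≠ 1 by decide, show (2 : Fin 4) ≠ 1 by decide,
    show (3 : Fin 4) ≠ 1 by decide, if_false, if_true, ite_true, ite_false,
    reduceIte] at h0 h1 h2
  rw [hbc] at h0 h1 h2 ⊢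
  linear_combination h0 - pd 2 Φ p * h1 - pd 3 Φ p * h2
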